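/- Characterization of divergence via the privacy loss random variable: for probability measures μ, μ' with densities p, q (mutually absolutely continuous), and L = log(p(Z)/q(Z)) with Z ∼ μ, L' = log(q(Z')/p(Z')) with Z' ∼ μ', one has D_{e^ε}(μ‖μ') = Pr[L > ε] − e^ε Pr[L' < −ε]. -/

import Mathlib

open MeasureTheory Real

lemma integrable_of_prob_density {Z : Type*} [MeasurableSpace Z] (ν : Measure Z)
    (g : Z → ℝ) (hg : Measurable g) (hgpos : ∀ z, 0 ≤ g z)
    (h : IsProbabilityMeasure (ν.withDensity fun z => ENNReal.ofReal (g z))) :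
    Integrable g ν := by
  refine ⟨hg.aestronglyMeasurable, ?_⟩
  have h1 : ∫⁻ z, ‖g z‖ₑ ∂ν = ∫⁻ z, ENNReal.ofReal (g z) ∂ν := by
    congr 1; funext z; rw [← Real.enorm_eq_ofReal (hgpos z)]
  have h2 : ∫⁻ z, ENNReal.ofReal (g z) ∂ν
      = (ν.withDensity fun z => ENNReal.ofReal (g z)) Set.univ := by
    rw [withDensity_apply _ MeasurableSet.univ, setLIntegral_univ]
  rw [HasFiniteIntegral, h1, h2, measure_univ]
  exact ENNReal.one_lt_top

lemma density_measure_toReal {Z : Type*} [MeasurableSpace Z] (ν : Measure Z)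
    (g : Z → ℝ) (hg : Measurable g) (hgpos : ∀ z, 0 ≤ g z)
    {S : Set Z} (hS : MeasurableSet S) :
    ((ν.withDensity fun z => ENNReal.ofReal (g z)) S).toReal = ∫ z in S, g z ∂ν := by
  rw [withDensity_apply _ hS,
    integral_eq_lintegral_of_nonneg_ae (Filter.Eventually.of_forall fun z => hgpos z)
      (hg.aestronglyMeasurable.restrict)]

theorem hsDiv_eq_privacy_loss {Z : Type*} [MeasurableSpace Z] (ν : Measure Z)
    (p q : Z → ℝ) (hp : Measurable p) (hq : Measurable q)
    (hppos : ∀ z, 0 < p z) (hqpos : ∀ z, 0 < q z)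
    (hμ : IsProbabilityMeasure (ν.withDensity fun z => ENNReal.ofReal (p z)))
    (hμ' : IsProbabilityMeasure (ν.withDensity fun z => ENNReal.ofReal (q z)))
    (ε : ℝ) (hε : 0 ≤ ε) :
    ∫ z, max (p z - exp ε * q z) 0 ∂ν
      = ((ν.withDensity fun z => ENNReal.ofReal (p z))
            {z | ε < Real.log (p z / q z)}).toReal
        - exp ε * ((ν.withDensity fun z => ENNReal.ofReal (q z))
            {z | Real.log (q z / p z) < -ε}).toReal := by
  set f : Z → ℝ := fun z => p z - exp ε * q z with hf
  have hfm : Measurable f := hp.sub (measurable_const.mul hq)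
  have hS : MeasurableSet {z | 0 < f z} := measurableSet_lt measurable_const hfm
  have hset1 : {z | ε < Real.log (p z / q z)} = {z | 0 < f z} := by
    ext z
    simp only [Set.mem_setOf_eq, hf]
    rw [Real.lt_log_iff_exp_lt (div_pos (hppos z) (hqpos z)), lt_div_iff₀ (hqpos z)]
    constructor <;> intro h <;> linarith
  have hset2 : {z | Real.log (q z / p z) < -ε} = {z | 0 < f z} := by
    rw [← hset1]
    ext z
    simp only [Set.mem_setOf_eq]
    rw [show q z / p z = (p z / q z)⁻¹ from (inv_div _ _).symm, Real.log_inv, neg_lt_neg_iff]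
  have hip : Integrable p ν := integrable_of_prob_density ν p hp (fun z => (hppos z).le) hμ
  have hiq : Integrable q ν := integrable_of_prob_density ν q hq (fun z => (hqpos z).le) hμ'
  rw [hset1, hset2,
    density_measure_toReal ν p hp (fun z => (hppos z).le) hS,
    density_measure_toReal ν q hq (fun z => (hqpos z).le) hS]
  have hmax : (fun z => max (p z - exp ε * q z) 0) = Set.indicator {z | 0 < f z} f := by
    funext z
    simp only [Set.indicator_apply, Set.mem_setOf_eq]
    split_ifs with h
    · exact max_eq_left h.le
    · exact max_eq_right (le_of_not_gt h)
  rw [hmax, integral_indicator hS]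
  have : ∫ z in {z | 0 < f z}, f z ∂ν
      = ∫ z in {z | 0 < f z}, p z ∂ν - ∫ z in {z | 0 < f z}, exp ε * q z ∂ν := by
    exact integral_sub hip.integrableOn ((hiq.const_mul (exp ε)).integrableOn)
  rw [this, integral_const_mul]
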